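/- Let b ≥ 0, ℓ ≥ 2, and a - b(b-1)/2 ≡ ℓ (mod 2). If b(b-1)/2 + 2b(ℓ-2) + (ℓ-2)² < a ≤ b(b-1)/2 + 2bℓ + ℓ², or b(b-1)/2 - ℓ² ≤ a < b(b-1)/2 - (ℓ-2)², then (a, b)^T has a representation in base M = [[1,1],[0,1]] over digits {p, m} containing exactly ℓ occurrences of m (hence of length b + 2ℓ). -/

import Mathlib

/-- The Jordan block `[[1,1],[0,1]]`. -/
def M1 : Matrix (Fin 2) (Fin 2) ℤ := !![1, 1; 0, 1]

/-- The digit `p = (0,1)ᵀ`. -/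
def pd : Fin 2 → ℤ := ![0, 1]

/-- The digit `m = (0,-1)ᵀ`. -/
def md : Fin 2 → ℤ := ![0, -1]

/-- The vector represented by the word `d_{k-1} … d_0`, namely `∑ M^i d_i`. -/
def val1 {k : ℕ} (d : Fin k → (Fin 2 → ℤ)) : Fin 2 → ℤ :=
  ∑ i : Fin k, (M1 ^ (i : ℕ)).mulVec (d i)

lemma M1_pow (n : ℕ) : M1 ^ n = !![1, (n:ℤ); 0, 1] := by
  induction n with
  | zero => simp [Matrix.one_fin_two]
  | succ n ih =>
    rw [pow_succ, ih, M1]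
    ext i j
    fin_cases i <;> fin_cases j <;>
      simp [Matrix.mul_apply, Fin.sum_univ_two] <;> push_cast <;> ring

lemma mv_pd (n : ℕ) : (M1 ^ n).mulVec pd = ![(n:ℤ), 1] := by
  rw [M1_pow]
  funext i
  fin_cases i <;> simp [Matrix.mulVec, dotProduct, Fin.sum_univ_two, pd]

lemma mv_md (n : ℕ) : (M1 ^ n).mulVec md = ![-(n:ℤ), -1] := by
  rw [M1_pow]
  funext i
  fin_cases i <;> simp [Matrix.mulVec, dotProduct, Fin.sum_univ_two, md]

lemma subset_sum (ℓ : ℕ) : ∀ k T : ℕ, ℓ ≤ k → ℓ*(ℓ-1) ≤ 2*T → 2*T ≤ ℓ*(2*k - ℓ - 1) →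
    ∃ s : Finset ℕ, s ⊆ Finset.range k ∧ s.card = ℓ ∧ ∑ i ∈ s, i = T := by
  induction ℓ with
  | zero =>
    intro k T _ _ h2
    exact ⟨∅, Finset.empty_subset _, rfl, by simp; omega⟩
  | succ ℓ ih =>
    intro k T hk h1 h2
    have hLev : Even (ℓ*(ℓ-1)) := by
      rcases Nat.even_or_odd ℓ with h | h
      · exact h.mul_right _
      · exact (Nat.Odd.sub_odd h odd_one).mul_left _
    obtain ⟨L, hL⟩ := hLev
    have hL2 : ℓ*(ℓ-1) = 2*L := by omega
    have hexp1 : (ℓ+1)*((ℓ+1)-1) = ℓ*(ℓ-1) + 2*ℓ := by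
      cases ℓ with
      | zero => rfl
      | succ n => simp [Nat.succ_sub_one]; ring
    set e := min (k-1) (T - L) with he
    have hℓe : ℓ ≤ e := by omega
    have heT : e ≤ T - L := min_le_right _ _
    have hek : e ≤ k - 1 := min_le_left _ _
    have hLT : L + ℓ ≤ T := by omega
    have hih1 : ℓ*(ℓ-1) ≤ 2*(T - e) := by omega
    have hih2 : 2*(T - e) ≤ ℓ*(2*e - ℓ - 1) := by
      rcases le_or_gt (T - L) (k-1) with hc | hc
      · have heq : e = T - L := by omega
        have hmono : ℓ - 1 ≤ 2*e - ℓ - 1 := by omega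
        have := Nat.mul_le_mul_left ℓ hmono
        omega
      · have heq : e = k - 1 := by omega
        rw [heq]
        have hexp : (ℓ+1)*(2*k - (ℓ+1) - 1) = ℓ*(2*(k-1) - ℓ - 1) + ℓ + (2*k - ℓ - 2) := by
          cases ℓ with
          | zero => simp; omega
          | succ n =>
            obtain ⟨q, hq⟩ : ∃ q, 2*k - n - 4 = q := ⟨_, rfl⟩
            have e1 : 2*k - (n+1+1) - 1 = q + 1 := by omega
            have e2 : 2*(k-1) - (n+1) - 1 = q := by omega
            have e3 : 2*k - (n+1) - 2 = q + 1 := by omega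
            rw [e1, e2, e3]; ring
        omega
    obtain ⟨s', hsub', hcard', hsum'⟩ := ih e (T - e) hℓe hih1 hih2
    have henot : e ∉ s' := fun h =>
      absurd (Finset.mem_range.mp (hsub' h)) (lt_irrefl e)
    refine ⟨insert e s', ?_, ?_, ?_⟩
    · intro x hx
      rcases Finset.mem_insert.mp hx with rfl | hx
      · exact Finset.mem_range.mpr (by omega)
      · exact Finset.range_subset_range.mpr (by omega) (hsub' hx)
    · rw [Finset.card_insert_of_notMem henot, hcard']
    · rw [Finset.sum_insert henot, hsum']; omega

theorem stmt6 (b ℓ : ℕ) (hℓ : 2 ≤ ℓ) (a : ℤ)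
    (hpar : (a - (b : ℤ) * ((b : ℤ) - 1) / 2) % 2 = (ℓ : ℤ) % 2)
    (hin : ((b : ℤ) * ((b : ℤ) - 1) / 2 + 2 * (b : ℤ) * ((ℓ : ℤ) - 2) + ((ℓ : ℤ) - 2) ^ 2 < a
            ∧ a ≤ (b : ℤ) * ((b : ℤ) - 1) / 2 + 2 * (b : ℤ) * (ℓ : ℤ) + (ℓ : ℤ) ^ 2)
         ∨ ((b : ℤ) * ((b : ℤ) - 1) / 2 - (ℓ : ℤ) ^ 2 ≤ a
            ∧ a < (b : ℤ) * ((b : ℤ) - 1) / 2 - ((ℓ : ℤ) - 2) ^ 2)) :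
    ∃ d : Fin (b + 2 * ℓ) → (Fin 2 → ℤ),
      (∀ i, d i = pd ∨ d i = md) ∧
      (Finset.univ.filter (fun i : Fin (b + 2 * ℓ) => d i = md)).card = ℓ ∧
      val1 d = ![a, (b : ℤ)] := by
  obtain ⟨c, hc⟩ : ∃ c : ℤ, (b:ℤ) * ((b:ℤ) - 1) = 2 * c := by
    rcases Int.even_or_odd (b:ℤ) with ⟨x, hx⟩ | ⟨x, hx⟩
    · exact ⟨x * ((b:ℤ)-1), by rw [hx]; ring⟩
    · exact ⟨(b:ℤ) * x, by rw [hx]; ring⟩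
  have hdiv : (b:ℤ) * ((b:ℤ) - 1) / 2 = c := by
    rw [hc]; exact Int.mul_ediv_cancel_left _ two_ne_zero
  rw [hdiv] at hpar hin
  set k := b + 2*ℓ with hk
  have hbn : (0:ℤ) ≤ (b:ℤ) := Int.natCast_nonneg b
  have hln : (2:ℤ) ≤ (ℓ:ℤ) := by exact_mod_cast hℓ
  have hlow : (ℓ:ℤ)*((ℓ:ℤ)-1) ≤ (c + 2*(b:ℤ)*(ℓ:ℤ) + 2*(ℓ:ℤ)^2 - (ℓ:ℤ)) - a := by
    rcases hin with ⟨_, h⟩ | ⟨h, _⟩ <;> nlinarith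
  have hhigh : (c + 2*(b:ℤ)*(ℓ:ℤ) + 2*(ℓ:ℤ)^2 - (ℓ:ℤ)) - a ≤ (ℓ:ℤ)*(2*(b:ℤ) + 3*(ℓ:ℤ) - 1) := by
    rcases hin with ⟨h, _⟩ | ⟨_, h⟩
    · nlinarith [mul_nonneg hbn (by linarith : (0:ℤ) ≤ (ℓ:ℤ)-2), sq_nonneg ((ℓ:ℤ)-1)]
    · nlinarith
  obtain ⟨t, ht⟩ : 2 ∣ (c + 2*(b:ℤ)*(ℓ:ℤ) + 2*(ℓ:ℤ)^2 - (ℓ:ℤ)) - a := by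
    obtain ⟨u, hu⟩ : ∃ u : ℤ, (b:ℤ)*(ℓ:ℤ) = u := ⟨_, rfl⟩
    obtain ⟨v, hv⟩ : ∃ v : ℤ, (ℓ:ℤ)^2 = v := ⟨_, rfl⟩
    have hrw : c + 2*(b:ℤ)*(ℓ:ℤ) + 2*(ℓ:ℤ)^2 - (ℓ:ℤ) - a = c + 2*u + 2*v - (ℓ:ℤ) - a := by
      rw [← hu, ← hv]; ring
    rw [hrw]
    omega
  have ht0 : 0 ≤ t := by nlinarith
  have hT : ((t.toNat : ℤ)) = t := Int.toNat_of_nonneg ht0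
  have hcast1 : ((ℓ*(ℓ-1) : ℕ) : ℤ) = (ℓ:ℤ)*((ℓ:ℤ)-1) := by
    rw [Nat.cast_mul, Nat.cast_sub (by omega : 1 ≤ ℓ)]; push_cast; ring
  have hcast2 : ((ℓ*(2*k-ℓ-1) : ℕ) : ℤ) = (ℓ:ℤ)*(2*(b:ℤ) + 3*(ℓ:ℤ) - 1) := by
    rw [Nat.cast_mul, show 2*k-ℓ-1 = 2*b+3*ℓ-1 from by omega,
      Nat.cast_sub (by omega : 1 ≤ 2*b+3*ℓ)]
    push_cast; ring
  have hn1 : ℓ*(ℓ-1) ≤ 2*t.toNat := by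
    have hZ : ((ℓ*(ℓ-1) : ℕ) : ℤ) ≤ ((2*t.toNat : ℕ) : ℤ) := by
      rw [hcast1]; push_cast [hT]; linarith
    exact_mod_cast hZ
  have hn2 : 2*t.toNat ≤ ℓ*(2*k - ℓ - 1) := by
    have hZ : ((2*t.toNat : ℕ) : ℤ) ≤ ((ℓ*(2*k-ℓ-1) : ℕ) : ℤ) := by
      rw [hcast2]; push_cast [hT]; linarith
    exact_mod_cast hZ
  obtain ⟨s, hsub, hcard, hsum⟩ := subset_sum ℓ k t.toNat (by omega) hn1 hn2
  have hpm : ¬ (pd = md) := by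
    intro h; have := congrFun h 1; simp [pd, md] at this
  refine ⟨fun i => if (i:ℕ) ∈ s then md else pd, fun i => ?_, ?_, ?_⟩
  · by_cases h : (i:ℕ) ∈ s <;> simp [h]
  · have hfe : (Finset.univ.filter (fun i : Fin k => (if (i:ℕ) ∈ s then md else pd) = md))
        = Finset.univ.filter (fun i : Fin k => (i:ℕ) ∈ s) := by
      apply Finset.filter_congr
      intro i _
      by_cases h : (i:ℕ) ∈ s <;> simp [h, hpm]
    rw [hfe, Finset.card_filter,
      Fin.sum_univ_eq_sum_range (fun n => if n ∈ s then 1 else 0) k,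
      Finset.sum_ite_mem, Finset.inter_eq_right.mpr hsub]
    simp [hcard]
  · have hval : ∀ i : Fin k, (M1 ^ (i:ℕ)).mulVec (if (i:ℕ) ∈ s then md else pd)
        = if (i:ℕ) ∈ s then ![-((i:ℕ):ℤ), -1] else ![((i:ℕ):ℤ), 1] := by
      intro i
      by_cases h : (i:ℕ) ∈ s <;> simp only [h, ↓reduceIte, mv_pd, mv_md]
    -- Gauss sum
    set G : ℕ := ∑ i ∈ Finset.range k, i with hG
    have hG2 : 2*(G:ℤ) = ((b:ℤ)+2*(ℓ:ℤ))*((b:ℤ)+2*(ℓ:ℤ)-1) := by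
      have hg := Finset.sum_range_id_mul_two k
      have hcast : ((k*(k-1) : ℕ) : ℤ) = ((b:ℤ)+2*(ℓ:ℤ))*((b:ℤ)+2*(ℓ:ℤ)-1) := by
        rw [Nat.cast_mul, Nat.cast_sub (by omega : 1 ≤ k)]
        push_cast [hk]; ring
      have : ((G*2 : ℕ) : ℤ) = ((k*(k-1) : ℕ) : ℤ) := by rw [hg]
      rw [hcast] at this
      push_cast at this
      linarith
    have hGval : (G:ℤ) = c + 2*(b:ℤ)*(ℓ:ℤ) + 2*(ℓ:ℤ)^2 - (ℓ:ℤ) := by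
      have hexp : ((b:ℤ)+2*(ℓ:ℤ))*((b:ℤ)+2*(ℓ:ℤ)-1)
          = 2*c + 4*(b:ℤ)*(ℓ:ℤ) + 4*(ℓ:ℤ)^2 - 2*(ℓ:ℤ) := by linear_combination hc
      linarith [hG2, hexp]
    have hcomp0 : (val1 fun i : Fin k => if (i:ℕ) ∈ s then md else pd) 0 = a := by
      rw [val1, Finset.sum_apply]
      calc (∑ i : Fin k, ((M1 ^ (i:ℕ)).mulVec (if (i:ℕ) ∈ s then md else pd)) 0)
          = ∑ i : Fin k, (fun n : ℕ => if n ∈ s then -(n:ℤ) else (n:ℤ)) (i:ℕ) := by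
            apply Finset.sum_congr rfl
            intro i _
            rw [hval i]
            by_cases h : (i:ℕ) ∈ s <;> simp [h]
        _ = ∑ n ∈ Finset.range k, (if n ∈ s then -(n:ℤ) else (n:ℤ)) :=
            Fin.sum_univ_eq_sum_range (fun n : ℕ => if n ∈ s then -(n:ℤ) else (n:ℤ)) k
        _ = ∑ n ∈ Finset.range k, ((n:ℤ) + if n ∈ s then (-2)*(n:ℤ) else 0) := by
            apply Finset.sum_congr rfl
            intro n _
            by_cases h : n ∈ s <;> simp [h]; ring
        _ = (∑ n ∈ Finset.range k, (n:ℤ)) + ∑ n ∈ s, (-2)*(n:ℤ) := by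
            rw [Finset.sum_add_distrib, Finset.sum_ite_mem, Finset.inter_eq_right.mpr hsub]
        _ = (G:ℤ) + (-2)*(t.toNat:ℤ) := by
            rw [← Finset.mul_sum, ← Nat.cast_sum, ← Nat.cast_sum, hsum, ← hG]
        _ = a := by
            rw [hT, hGval]
            linarith
    have hcomp1 : (val1 fun i : Fin k => if (i:ℕ) ∈ s then md else pd) 1 = (b:ℤ) := by
      rw [val1, Finset.sum_apply]
      calc (∑ i : Fin k, ((M1 ^ (i:ℕ)).mulVec (if (i:ℕ) ∈ s then md else pd)) 1)
          = ∑ i : Fin k, (fun n : ℕ => if n ∈ s then (-1:ℤ) else 1) (i:ℕ) := by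
            apply Finset.sum_congr rfl
            intro i _
            rw [hval i]
            by_cases h : (i:ℕ) ∈ s <;> simp [h]
        _ = ∑ n ∈ Finset.range k, (if n ∈ s then (-1:ℤ) else 1) :=
            Fin.sum_univ_eq_sum_range (fun n : ℕ => if n ∈ s then (-1:ℤ) else 1) k
        _ = ∑ n ∈ Finset.range k, ((1:ℤ) + if n ∈ s then (-2:ℤ) else 0) := by
            apply Finset.sum_congr rfl
            intro n _
            by_cases h : n ∈ s <;> simp [h]
        _ = (k:ℤ) + ∑ n ∈ s, (-2:ℤ) := by
            rw [Finset.sum_add_distrib, Finset.sum_ite_mem, Finset.inter_eq_right.mpr hsub]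
            simp
        _ = (b:ℤ) := by
            rw [Finset.sum_const, hcard, hk]
            simp [nsmul_eq_mul]
            push_cast
            ring
    funext j
    fin_cases j
    · simpa using hcomp0
    · simpa using hcomp1
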